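/- Let M₀ and M₁ be finite matroids on a common ground set E, and let I₀ and I₁ each be independent in both M₀ and M₁. Then there exists a set I, independent in both M₀ and M₁, such that Iᵢ ⊆ span_{Mᵢ}(I) for i ∈ {0,1}. -/

import Mathlib

open Set

/-- **Kundu–Lawler theorem.** For finite matroids `M₀, M₁` on a common ground set and sets
`I₀, I₁` independent in both, there is a common independent set `I` with
`Iᵢ ⊆ span_{Mᵢ}(I)` for `i ∈ {0,1}`. -/
theorem kundu_lawler {α : Type*} (M₀ M₁ : Matroid α) [M₀.Finite] [M₁.Finite]
    (hE : M₀.E = M₁.E) (I₀ I₁ : Set α)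
    (h₀₀ : M₀.Indep I₀) (h₀₁ : M₁.Indep I₀) (h₁₀ : M₀.Indep I₁) (h₁₁ : M₁.Indep I₁) :
    ∃ I, M₀.Indep I ∧ M₁.Indep I ∧ I₀ ⊆ M₀.closure I ∧ I₁ ⊆ M₁.closure I := by
  have hI₀fin : I₀.Finite := M₀.set_finite I₀ h₀₀.subset_ground
  suffices h : ∀ n (I₁ : Set α), (I₀ \ I₁).ncard = n → M₀.Indep I₁ → M₁.Indep I₁ →
      ∃ I, M₀.Indep I ∧ M₁.Indep I ∧ I₀ ⊆ M₀.closure I ∧ I₁ ⊆ M₁.closure I by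
    exact h _ I₁ rfl h₁₀ h₁₁
  intro n
  induction n using Nat.strong_induction_on with
  | _ n IH =>
    intro I₁ hn h₁₀ h₁₁
    by_cases hsub : I₀ ⊆ M₀.closure I₁
    · exact ⟨I₁, h₁₀, h₁₁, hsub, M₁.subset_closure I₁ h₁₁.subset_ground⟩
    · obtain ⟨x, hxI₀, hxcl⟩ := not_subset.mp hsub
      have hxE₀ : x ∈ M₀.E := h₀₀.subset_ground hxI₀
      have hxI₁ : x ∉ I₁ := fun h => hxcl (M₀.subset_closure I₁ h₁₀.subset_ground h)
      have hJ₀ : M₀.Indep (insert x I₁) := by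
        rw [h₁₀.insert_indep_iff]; exact Or.inl ⟨hxE₀, hxcl⟩
      have hsmall : M₁.Indep (insert x (I₀ ∩ I₁)) :=
        h₀₁.subset (insert_subset hxI₀ inter_subset_left)
      have hJE : insert x I₁ ⊆ M₁.E := insert_subset (hE ▸ hxE₀) h₁₁.subset_ground
      obtain ⟨B, hB, hsubB⟩ :=
        hsmall.subset_isBasis_of_subset (insert_subset_insert inter_subset_right) hJE
      have hBindep₁ : M₁.Indep B := hB.indep
      have hBindep₀ : M₀.Indep B := hJ₀.subset hB.subset
      have hxB : x ∈ B := hsubB (mem_insert _ _)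
      have hdiff : I₀ \ B ⊆ (I₀ \ I₁) \ {x} := by
        rintro z ⟨hz0, hzB⟩
        refine ⟨⟨hz0, fun hz1 => hzB (hsubB (mem_insert_of_mem _ ⟨hz0, hz1⟩))⟩, ?_⟩
        simp only [mem_singleton_iff]
        rintro rfl; exact hzB hxB
      have hlt : (I₀ \ B).ncard < n := by
        subst hn
        calc (I₀ \ B).ncard ≤ ((I₀ \ I₁) \ {x}).ncard :=
              ncard_le_ncard hdiff (hI₀fin.diff.diff)
          _ < (I₀ \ I₁).ncard :=
              ncard_diff_singleton_lt_of_mem ⟨hxI₀, hxI₁⟩ hI₀fin.diff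
      obtain ⟨I, hI₀, hI₁, hcl₀, hclB⟩ := IH _ hlt B rfl hBindep₀ hBindep₁
      refine ⟨I, hI₀, hI₁, hcl₀, ?_⟩
      have h1 : I₁ ⊆ M₁.closure B := (subset_insert x I₁).trans hB.subset_closure
      have h2 : M₁.closure B ⊆ M₁.closure I := by
        have := M₁.closure_subset_closure hclB
        rwa [M₁.closure_closure] at this
      exact h1.trans h2
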